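/- Fix u ∈ ℝ and w > 0, and let f(z) := ((1+i)/√2) · √((1+z)/(1−z)) + u − i·w for z ∈ 𝔻, where the square root is the principal branch, so that f is a bijection from 𝔻 onto {z ∈ ℂ : Re z > u, Im z > −w}. Then Arg(1 − f⁻¹(t)) → π/2 as real t → +∞ (here f⁻¹(t) ∈ 𝔻 is defined for real t > u). -/

import Mathlib

open Complex Filter Real Set

/-- The open unit disc in the complex plane. -/
noncomputable def unitDisc : Set ℂ := {z : ℂ | ‖z‖ < 1}

/-- The map `f(z) = ((1+i)/√2) √((1+z)/(1-z)) + u - i w`, where the square root is the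
principal branch `√ζ = exp((1/2) Log ζ)`. -/
noncomputable def quadrantMap (u w : ℝ) (z : ℂ) : ℂ :=
  ((1 + Complex.I) / (Real.sqrt 2 : ℂ)) *
    Complex.exp ((1 / 2 : ℂ) * Complex.log ((1 + z) / (1 - z))) + (u : ℂ) -
    Complex.I * (w : ℂ)

/-- For the conformal map `f` of the disc onto the quadrant `{Re z > u, Im z > -w}` given by
`f(z) = ((1+i)/√2) √((1+z)/(1-z)) + u - i w`, one has `Arg(1 - f⁻¹(t)) → π/2` as the real
parameter `t → +∞`. -/
theorem quadrantMap_slope (u w : ℝ) (hw : 0 < w) (finv : ℂ → ℂ)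
    (hbij : Set.BijOn (quadrantMap u w) unitDisc {z : ℂ | u < z.re ∧ -w < z.im})
    (hleft : ∀ z ∈ unitDisc, finv (quadrantMap u w z) = z)
    (hright : ∀ ζ ∈ {z : ℂ | u < z.re ∧ -w < z.im}, quadrantMap u w (finv ζ) = ζ) :
    Tendsto (fun t : ℝ => Complex.arg (1 - finv (t : ℂ))) atTop
      (nhds (π / 2)) := by
  have h2 : Real.sqrt 2 * Real.sqrt 2 = 2 := Real.mul_self_sqrt (by norm_num)
  have hne : Real.sqrt 2 ≠ 0 := by positivity
  have key : ∀ᶠ t : ℝ in atTop,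
      Complex.arg (1 - finv (t : ℂ)) =
        Real.arctan (((t - u) ^ 2 - w ^ 2) / (2 * w * (t - u) + 1)) := by
    filter_upwards [eventually_gt_atTop u] with t ht
    set a : ℝ := t - u with hadef
    have ha0 : 0 < a := by simp only [hadef]; linarith
    set S : ℂ := ((2 * w * a : ℝ) : ℂ) + Complex.I * ((-(a ^ 2 - w ^ 2) : ℝ) : ℂ) with hSdef
    have hSre : S.re = 2 * w * a := by
      simp [hSdef, ← Complex.ofReal_pow]
    have hSim : S.im = -(a ^ 2 - w ^ 2) := by
      simp [hSdef, ← Complex.ofReal_pow]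
    have hSrepos : 0 < S.re := by rw [hSre]; positivity
    have hSne : S ≠ 0 := by
      intro h; rw [h] at hSrepos; simp at hSrepos
    have hS1re : (S + 1).re = 2 * w * a + 1 := by simp [hSre]
    have hS1repos : 0 < (S + 1).re := by rw [hS1re]; positivity
    have hS1ne : S + 1 ≠ 0 := by
      intro h; rw [h] at hS1repos; simp at hS1repos
    set z : ℂ := (S - 1) / (S + 1) with hzdef
    -- z is in the unit disc
    have hzdisc : z ∈ unitDisc := by
      have hn : Complex.normSq (S - 1) < Complex.normSq (S + 1) := by
        simp only [Complex.normSq_apply, Complex.sub_re, Complex.sub_im, Complex.add_re,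
          Complex.add_im, Complex.one_re, Complex.one_im]
        nlinarith [hSrepos, sq_nonneg S.im]
      have habs : ‖S - 1‖ < ‖S + 1‖ := by
        rw [Complex.norm_def, Complex.norm_def]
        exact Real.sqrt_lt_sqrt (Complex.normSq_nonneg _) hn
      have habsz : ‖z‖ = ‖S - 1‖ / ‖S + 1‖ := by
        rw [hzdef, norm_div]
      rw [unitDisc, mem_setOf_eq, habsz, div_lt_one (norm_pos_iff.mpr hS1ne)]
      exact habs
    have h1z : (1 : ℂ) - z = 2 / (S + 1) := by
      rw [hzdef]; field_simp; norm_num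
    have h1zne : (1 : ℂ) - z ≠ 0 := by
      rw [h1z]; exact div_ne_zero (by norm_num) hS1ne
    have hratio : (1 + z) / (1 - z) = S := by
      rw [div_eq_iff h1zne, hzdef]
      field_simp
      ring
    -- the square root value
    set s : ℂ := (((a + w) / Real.sqrt 2 : ℝ) : ℂ) + Complex.I * (((w - a) / Real.sqrt 2 : ℝ) : ℂ)
      with hsdef
    have hsre : 0 < s.re := by
      have h1 : s.re = (a + w) / Real.sqrt 2 := by
        simp [hsdef]
      rw [h1]; positivity
    have hs2 : s ^ 2 = S := by
      rw [hsdef, hSdef]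
      apply Complex.ext
      · simp only [sq, Complex.mul_re, Complex.add_re, Complex.add_im, Complex.ofReal_re,
          Complex.ofReal_im, Complex.mul_im, Complex.I_re, Complex.I_im]
        field_simp
        rw [Real.sq_sqrt (by norm_num : (0:ℝ) ≤ 2)]
        ring
      · simp only [sq, Complex.mul_re, Complex.add_re, Complex.add_im, Complex.ofReal_re,
          Complex.ofReal_im, Complex.mul_im, Complex.I_re, Complex.I_im]
        field_simp
        rw [Real.sq_sqrt (by norm_num : (0:ℝ) ≤ 2)]
        ring
    set E : ℂ := Complex.exp ((1 / 2 : ℂ) * Complex.log S) with hEdef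
    have hE2 : E ^ 2 = S := by
      rw [hEdef, sq, ← Complex.exp_add]
      have hh : (1 / 2 : ℂ) * Complex.log S + (1 / 2 : ℂ) * Complex.log S = Complex.log S := by
        ring
      rw [hh, Complex.exp_log hSne]
    have hargS : |Complex.arg S| < π / 2 :=
      Complex.abs_arg_lt_pi_div_two_iff.mpr (Or.inl hSrepos)
    have hEre : 0 < E.re := by
      rw [hEdef, Complex.exp_re]
      have him : ((1 / 2 : ℂ) * Complex.log S).im = Complex.arg S / 2 := by
        simp [Complex.mul_im, Complex.log_im]
        ring
      rw [him]
      have hcos : 0 < Real.cos (Complex.arg S / 2) := by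
        apply Real.cos_pos_of_mem_Ioo
        constructor
        · nlinarith [abs_lt.mp hargS, Real.pi_pos]
        · nlinarith [abs_lt.mp hargS, Real.pi_pos]
      positivity
    have hEs : E = s := by
      have hfac : (E - s) * (E + s) = 0 := by
        have hh : E ^ 2 = s ^ 2 := by rw [hE2, hs2]
        linear_combination hh
      rcases mul_eq_zero.mp hfac with h | h
      · exact sub_eq_zero.mp h
      · exfalso
        have hE : E = -s := eq_neg_of_add_eq_zero_left h
        rw [hE, Complex.neg_re] at hEre
        linarith
    -- the map sends z to t
    have hcs : ((1 + Complex.I) / (Real.sqrt 2 : ℂ)) * s = (a : ℂ) + Complex.I * (w : ℂ) := by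
      rw [hsdef]
      have hne' : ((Real.sqrt 2 : ℝ) : ℂ) ≠ 0 := by exact_mod_cast hne
      have h2' : ((Real.sqrt 2 : ℝ) : ℂ) * ((Real.sqrt 2 : ℝ) : ℂ) = 2 := by
        exact_mod_cast h2
      push_cast
      field_simp
      have hr2 : ((Real.sqrt 2 : ℝ) : ℂ) ^ 2 = 2 := by rw [sq, h2']
      linear_combination ((w:ℂ) - (a:ℂ)) * Complex.I_sq +
        (-Complex.I*(w:ℂ) - (a:ℂ)) * hr2
    have hmap : quadrantMap u w z = (t : ℂ) := by
      rw [quadrantMap, hratio, ← hEdef, hEs, hcs, hadef]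
      push_cast
      ring
    have hfinv : finv (t : ℂ) = z := by
      rw [← hmap, hleft z hzdisc]
    -- compute the argument
    rw [hfinv, h1z]
    have h2c : (2 : ℂ) / (S + 1) = ((2 : ℝ) : ℂ) * (S + 1)⁻¹ := by
      push_cast; ring
    rw [h2c, Complex.arg_real_mul _ (by norm_num : (0:ℝ) < 2), Complex.arg_inv]
    have hargne : Complex.arg (S + 1) ≠ π := by
      intro h
      rw [Complex.arg_eq_pi_iff] at h
      linarith [h.1]
    rw [if_neg hargne]
    have harg1 : |Complex.arg (S + 1)| < π / 2 :=
      Complex.abs_arg_lt_pi_div_two_iff.mpr (Or.inl hS1repos)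
    have hargval : Complex.arg (S + 1) = Real.arctan ((S + 1).im / (S + 1).re) := by
      rw [← Complex.tan_arg, Real.arctan_tan (by linarith [abs_lt.mp harg1])
        (by linarith [abs_lt.mp harg1])]
    rw [hargval]
    have hS1im : (S + 1).im = -(a ^ 2 - w ^ 2) := by simp [hSim]
    rw [hS1im, hS1re, ← Real.arctan_neg]
    congr 1
    rw [neg_div, neg_neg]
  -- the limit of the explicit formula
  have hlim : Tendsto (fun t : ℝ => Real.arctan (((t - u) ^ 2 - w ^ 2) / (2 * w * (t - u) + 1)))
      atTop (nhds (π / 2)) := by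
    have hratio : Tendsto (fun t : ℝ => ((t - u) ^ 2 - w ^ 2) / (2 * w * (t - u) + 1))
        atTop atTop := by
      have hle : (fun t : ℝ => (t - u - w) / (2 * w + 1)) ≤ᶠ[atTop]
          fun t : ℝ => ((t - u) ^ 2 - w ^ 2) / (2 * w * (t - u) + 1) := by
        filter_upwards [eventually_ge_atTop (u + w + 1)] with t ht
        have ha : t - u ≥ w + 1 := by linarith
        rw [div_le_div_iff₀ (by linarith) (by nlinarith)]
        nlinarith [sq_nonneg (t - u - 1), sq_nonneg w, mul_pos hw hw]
      have hlow : Tendsto (fun t : ℝ => (t - u - w) / (2 * w + 1)) atTop atTop := by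
        have h1 : Tendsto (fun t : ℝ => t - u - w) atTop atTop := by
          have h0 := tendsto_atTop_add_const_right atTop (-u - w) (tendsto_id (α := ℝ))
          exact h0.congr (by intro x; simp; ring)
        exact h1.atTop_div_const (by linarith)
      exact tendsto_atTop_mono' atTop hle hlow
    exact (Real.tendsto_arctan_atTop.mono_right nhdsWithin_le_nhds).comp hratio
  exact Filter.Tendsto.congr' (key.mono fun t h => h.symm) hlim
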